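/- arXiv:1507.07212 — 2 statements merged into one kernel-verified Lean document; each statement's English description precedes it below -/
import Mathlib

section
/- For every bus k and all V_d, V_q ∈ ℝⁿ, with x = (V_d; V_q) ∈ ℝ^{2n} and complex voltage vector V = V_d + i·V_q ∈ ℂⁿ, the complex power injection at bus k satisfies xᵀ·𝐘_k·x + i·(xᵀ·𝐘̄_k·x) = V_k · conj((Y·V)_k). -/
open Matrix

lemma quadsym {m : Type*} [Fintype m] (A : Matrix m m ℝ) (x : m → ℝ) :
    x ⬝ᵥ ((1/2 : ℝ) • (A + Aᵀ)).mulVec x = x ⬝ᵥ A.mulVec x := by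
  rw [Matrix.smul_mulVec, Matrix.add_mulVec, dotProduct_smul, dotProduct_add,
    Matrix.mulVec_transpose, dotProduct_comm x (x ᵥ* A), ← Matrix.dotProduct_mulVec,
    smul_eq_mul]
  ring


/-- The complex power injection at bus k satisfies
xᵀ·𝐘_k·x + i·(xᵀ·𝐘̄_k·x) = V_k · conj((Y·V)_k). -/
theorem stmt_9 (n : ℕ) (hn : 1 ≤ n) (Y : Matrix (Fin n) (Fin n) ℂ) (k : Fin n)
    (Yk : Matrix (Fin n) (Fin n) ℂ) (hYk : Yk = Matrix.single k k 1 * Y)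
    (Mk : Matrix (Fin n ⊕ Fin n) (Fin n ⊕ Fin n) ℝ)
    (hMk : Mk = (1 / 2 : ℝ) • Matrix.fromBlocks
        ((Yk + Ykᵀ).map Complex.re) ((Ykᵀ - Yk).map Complex.im)
        ((Yk - Ykᵀ).map Complex.im) ((Yk + Ykᵀ).map Complex.re))
    (Mbk : Matrix (Fin n ⊕ Fin n) (Fin n ⊕ Fin n) ℝ)
    (hMbk : Mbk = -((1 / 2 : ℝ) • Matrix.fromBlocks
        ((Yk + Ykᵀ).map Complex.im) ((Yk - Ykᵀ).map Complex.re)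
        ((Ykᵀ - Yk).map Complex.re) ((Yk + Ykᵀ).map Complex.im)))
    (Vd Vq : Fin n → ℝ) (x : Fin n ⊕ Fin n → ℝ) (hx : x = Sum.elim Vd Vq)
    (V : Fin n → ℂ) (hV : V = fun i => (Vd i : ℂ) + Complex.I * (Vq i : ℂ)) :
    ((x ⬝ᵥ Mk.mulVec x : ℝ) : ℂ) + Complex.I * ((x ⬝ᵥ Mbk.mulVec x : ℝ) : ℂ)
      = V k * (starRingEnd ℂ) ((Y.mulVec V) k) := by
  set N : Matrix (Fin n ⊕ Fin n) (Fin n ⊕ Fin n) ℝ :=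
    Matrix.fromBlocks (Yk.map Complex.re) (-(Yk.map Complex.im))
      (Yk.map Complex.im) (Yk.map Complex.re) with hN
  set Nb : Matrix (Fin n ⊕ Fin n) (Fin n ⊕ Fin n) ℝ :=
    Matrix.fromBlocks (Yk.map Complex.im) (Yk.map Complex.re)
      (-(Yk.map Complex.re)) (Yk.map Complex.im) with hNb
  have hMkN : Mk = (1/2 : ℝ) • (N + Nᵀ) := by
    rw [hMk, hN]
    congr 1
    ext (i|i) (j|j) <;>
      simp [Matrix.fromBlocks, Matrix.transpose_apply] <;> ring
  have hMbkN : Mbk = -((1/2 : ℝ) • (Nb + Nbᵀ)) := by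
    rw [hMbk, hNb]
    congr 2
    ext (i|i) (j|j) <;>
      simp [Matrix.fromBlocks, Matrix.transpose_apply] <;> ring
  rw [hMkN, hMbkN, quadsym, Matrix.neg_mulVec, dotProduct_neg, quadsym]
  have hYke : ∀ i j, Yk i j = if i = k then Y k j else 0 := by
    intro i j; simp [hYk, Matrix.mul_apply, Matrix.single, ite_and, eq_comm]
  have h1 : x ⬝ᵥ N.mulVec x =
      Vd k * ((∑ j, (Y k j).re * Vd j) - ∑ j, (Y k j).im * Vq j)
        + Vq k * ((∑ j, (Y k j).im * Vd j) + ∑ j, (Y k j).re * Vq j) := by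
    rw [hx, hN, Matrix.fromBlocks_mulVec, sumElim_dotProduct_sumElim]
    simp only [mulVec, dotProduct, hYke, Matrix.map_apply, Matrix.neg_apply,
      apply_ite Complex.re, apply_ite Complex.im, Complex.zero_re, Complex.zero_im,
      ite_mul, zero_mul, neg_mul, neg_zero, Finset.sum_ite_irrel, Finset.sum_const_zero,
      mul_ite, mul_zero, Finset.sum_ite_eq', Finset.mem_univ, if_true, Pi.add_apply,
      Finset.sum_neg_distrib, Sum.elim_comp_inl, Sum.elim_comp_inr, Finset.sum_sub_distrib]
    simp only [mul_ite, mul_zero, mul_add, mul_sub, Finset.sum_ite_eq', Finset.mem_univ, if_true,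
      Finset.sum_sub_distrib, Finset.sum_add_distrib, apply_ite (fun r : ℝ => -r), neg_zero, Finset.sum_neg_distrib, Finset.sum_ite_eq']
    ring
  have h2 : x ⬝ᵥ Nb.mulVec x =
      Vd k * ((∑ j, (Y k j).im * Vd j) + ∑ j, (Y k j).re * Vq j)
        + Vq k * (-(∑ j, (Y k j).re * Vd j) + ∑ j, (Y k j).im * Vq j) := by
    rw [hx, hNb, Matrix.fromBlocks_mulVec, sumElim_dotProduct_sumElim]
    simp only [mulVec, dotProduct, hYke, Matrix.map_apply, Matrix.neg_apply,
      apply_ite Complex.re, apply_ite Complex.im, Complex.zero_re, Complex.zero_im,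
      ite_mul, zero_mul, neg_mul, neg_zero, Finset.sum_ite_irrel, Finset.sum_const_zero,
      mul_ite, mul_zero, Finset.sum_ite_eq', Finset.mem_univ, if_true, Pi.add_apply,
      Finset.sum_neg_distrib, Sum.elim_comp_inl, Sum.elim_comp_inr, Finset.sum_sub_distrib]
    simp only [mul_ite, mul_zero, mul_add, mul_sub, Finset.sum_ite_eq', Finset.mem_univ, if_true,
      Finset.sum_sub_distrib, Finset.sum_add_distrib, apply_ite (fun r : ℝ => -r), neg_zero,
      Finset.sum_neg_distrib]
  have hYV : (Y.mulVec V) k =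
      (((∑ j, (Y k j).re * Vd j) - ∑ j, (Y k j).im * Vq j : ℝ) : ℂ)
        + Complex.I * (((∑ j, (Y k j).im * Vd j) + ∑ j, (Y k j).re * Vq j : ℝ) : ℂ) := by
    rw [hV]
    simp only [mulVec, dotProduct]
    rw [Complex.ext_iff]
    constructor
    · simp [Complex.re_sum, Complex.mul_re, Finset.sum_sub_distrib]
    · simp [Complex.im_sum, Complex.mul_im, Finset.sum_add_distrib]
      ring
  rw [h1, h2, hYV, hV]
  rw [Complex.ext_iff]
  constructor
  · simp [Complex.mul_re]
    ring
  · simp [Complex.mul_im]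
    ring
end

section
/- For all V_d, V_q ∈ ℝⁿ with x = (V_d; V_q) ∈ ℝ^{2n}, the quadratic form of the line-flow matrix 𝐙_{lm} satisfies xᵀ·𝐙_{lm}·x = (V_{dl}² + V_{ql}²)·g/τ² + (V_{dl}V_{dm} + V_{ql}V_{qm})·(b·sin θ − g·cos θ)/τ + (V_{dl}V_{qm} − V_{ql}V_{dm})·(g·sin θ + b·cos θ)/τ, i.e., tr(𝐙_{lm}·x·xᵀ) equals the active power flow P_{lm} into the line at bus l. -/
open Matrix


lemma quad_std (N : Type*) [Fintype N] [DecidableEq N] (x : N → ℝ) (i j : N) :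
    x ⬝ᵥ (Matrix.single i j (1 : ℝ)).mulVec x = x i * x j := by
  simp only [Matrix.mulVec, dotProduct, Matrix.single, Matrix.of_apply,
    mul_ite, ite_mul, mul_one, mul_zero, zero_mul, ite_and]
  rw [Finset.sum_eq_single i]
  · rw [Finset.sum_eq_single j] <;> simp +contextual [eq_comm]
  · intro b _ hb; simp [Ne.symm hb]
  · simp

/-- The quadratic form of the line-flow matrix 𝐙_{lm} equals the active
power flow P_{lm} into the line at bus l, in rectangular voltage coordinates. -/
theorem stmt_16 (n : ℕ) (hn : 2 ≤ n) (l m : Fin n) (hlm : l ≠ m)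
    (τ θ g b bsh : ℝ) (hτ : 0 < τ)
    (clm slm : ℝ)
    (hclm : clm = (g * Real.cos θ - b * Real.sin θ) / (2 * τ))
    (hslm : slm = (g * Real.sin θ + b * Real.cos θ) / (2 * τ))
    (Z : Matrix (Fin n ⊕ Fin n) (Fin n ⊕ Fin n) ℝ)
    (hZ : Z = (g / τ ^ 2) • (Matrix.single (Sum.inl l) (Sum.inl l) (1 : ℝ)
            + Matrix.single (Sum.inr l) (Sum.inr l) 1)
        - clm • (Matrix.single (Sum.inl l) (Sum.inl m) (1 : ℝ)
            + Matrix.single (Sum.inl m) (Sum.inl l) 1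
            + Matrix.single (Sum.inr l) (Sum.inr m) 1
            + Matrix.single (Sum.inr m) (Sum.inr l) 1)
        + slm • (Matrix.single (Sum.inl l) (Sum.inr m) (1 : ℝ)
            + Matrix.single (Sum.inr m) (Sum.inl l) 1
            - Matrix.single (Sum.inr l) (Sum.inl m) 1
            - Matrix.single (Sum.inl m) (Sum.inr l) 1))
    (Vd Vq : Fin n → ℝ) (x : Fin n ⊕ Fin n → ℝ) (hx : x = Sum.elim Vd Vq) :
    x ⬝ᵥ Z.mulVec x
      = (Vd l ^ 2 + Vq l ^ 2) * g / τ ^ 2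
        + (Vd l * Vd m + Vq l * Vq m) * (b * Real.sin θ - g * Real.cos θ) / τ
        + (Vd l * Vq m - Vq l * Vd m) * (g * Real.sin θ + b * Real.cos θ) / τ := by
  subst hZ hx hclm hslm
  simp only [Matrix.sub_mulVec, Matrix.add_mulVec, Matrix.smul_mulVec,
    dotProduct_add, dotProduct_sub, dotProduct_smul, quad_std, smul_eq_mul]
  simp only [Sum.elim_inl, Sum.elim_inr]
  field_simp
  ring
end
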